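/- Let f : ℝ → ℝ be continuously differentiable with f(z) = 0 for all sufficiently negative z. Then ∫_{-∞}^0 f(z)²/(1-z)² dz ≤ 2·f(0)² + 8·∫_{-∞}^0 f'(z)² dz. -/

import Mathlib

open MeasureTheory

theorem stmt_18 (f : ℝ → ℝ) (hf : ContDiff ℝ 1 f)
    (hvanish : ∃ M : ℝ, ∀ z ≤ M, f z = 0) :
    ∫ z in Set.Iic (0 : ℝ), f z ^ 2 / (1 - z) ^ 2
      ≤ 2 * f 0 ^ 2 + 8 * ∫ z in Set.Iic (0 : ℝ), deriv f z ^ 2 := by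
  obtain ⟨M, hM⟩ := hvanish
  set M0 : ℝ := min M (-1) with hM0def
  have hM0le : M0 ≤ 0 := le_trans (min_le_right _ _) (by norm_num)
  have hM0 : ∀ z ≤ M0, f z = 0 := fun z hz => hM z (le_trans hz (min_le_left _ _))
  have hfderiv : Differentiable ℝ f := hf.differentiable one_ne_zero
  have hfc : Continuous f := hf.continuous
  have hf'c : Continuous (deriv f) := hf.continuous_deriv le_rfl
  have hderiv0 : ∀ z < M0, deriv f z = 0 := by
    intro z hz
    have hev : f =ᶠ[nhds z] (fun _ => (0 : ℝ)) := by
      filter_upwards [Iio_mem_nhds hz] with x hx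
      exact hM0 x (le_of_lt hx)
    rw [hev.deriv_eq]
    simp
  have hne : ∀ z : ℝ, z ≤ 0 → (1 - z) ≠ 0 := by intro z hz; nlinarith
  set g : ℝ → ℝ := fun z => f z ^ 2 / (1 - z) ^ 2 with hgdef
  set h : ℝ → ℝ := fun z => deriv f z ^ 2 with hhdef
  set D : ℝ → ℝ := fun z => 2 * f z * deriv f z / (1 - z) + f z ^ 2 / (1 - z) ^ 2
    with hDdef
  -- continuity facts
  have hgcont : ContinuousOn g (Set.Iic 0) := by
    apply ContinuousOn.div ((hfc.pow 2).continuousOn)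
      (((continuous_const.sub continuous_id).pow 2).continuousOn)
    intro z hz
    exact pow_ne_zero 2 (hne z hz)
  have hDcont : ContinuousOn D (Set.Iic 0) := by
    apply ContinuousOn.add
    · apply ContinuousOn.div
        (((continuous_const.mul hfc).mul hf'c).continuousOn)
        ((continuous_const.sub continuous_id).continuousOn)
      intro z hz; exact hne z hz
    · exact hgcont
  have hIccsub : Set.Icc M0 (0 : ℝ) ⊆ Set.Iic 0 := fun x hx => hx.2
  -- interval integrabilities
  have huIcc : Set.uIcc M0 (0 : ℝ) = Set.Icc M0 0 := Set.uIcc_of_le hM0le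
  have hgint : IntervalIntegrable g volume M0 0 :=
    (hgcont.mono (huIcc ▸ hIccsub)).intervalIntegrable
  have hhint : IntervalIntegrable h volume M0 0 :=
    ((hf'c.pow 2)).intervalIntegrable _ _
  have hDint : IntervalIntegrable D volume M0 0 :=
    (hDcont.mono (huIcc ▸ hIccsub)).intervalIntegrable
  -- FTC
  have hD : ∀ z ∈ Set.uIcc M0 (0 : ℝ),
      HasDerivAt (fun z => f z ^ 2 / (1 - z)) (D z) z := by
    intro z hz
    rw [huIcc] at hz
    have hz0 : z ≤ 0 := hz.2
    have h1 : HasDerivAt (fun z => f z ^ 2) (2 * f z * deriv f z) z := by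
      have := (hfderiv z).hasDerivAt.fun_pow 2
      simpa [mul_comm, mul_assoc] using this
    have h2 : HasDerivAt (fun z : ℝ => 1 - z) (-1) z := by
      simpa using (hasDerivAt_id z).const_sub 1
    have h3 := h1.fun_div h2 (hne z hz0)
    refine HasDerivAt.congr_deriv h3 (Eq.symm ?_)
    have hne' := hne z hz0
    have hp : (1 - z) ^ 2 ≠ 0 := pow_ne_zero 2 hne'
    have hp3 : (1 - z) * (1 - z) ^ 2 ≠ 0 := mul_ne_zero hne' hp
    simp only [hDdef]
    rw [div_add_div _ _ hne' hp, div_eq_div_iff hp3 hp]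
    ring
  have key : ∫ z in M0..0, D z = f 0 ^ 2 := by
    rw [intervalIntegral.integral_eq_sub_of_hasDerivAt hD hDint]
    rw [hM0 M0 le_rfl]
    norm_num
  -- pointwise inequality
  have hpt : ∀ z ∈ Set.Icc M0 (0 : ℝ),
      g z ≤ D z + (1 / 2) * g z + 2 * h z := by
    intro z hz
    have hz0 : z ≤ 0 := hz.2
    have hne' := hne z hz0
    have ha : f z ^ 2 / (1 - z) ^ 2 = (f z / (1 - z)) ^ 2 := by
      rw [div_pow]
    have hb : 2 * f z * deriv f z / (1 - z) = 2 * (f z / (1 - z)) * deriv f z := by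
      field_simp
    simp only [hgdef, hhdef, hDdef, ha, hb]
    nlinarith [sq_nonneg (f z / (1 - z) + 2 * deriv f z)]
  -- integral inequality on the interval
  have hRint : IntervalIntegrable (fun z => D z + (1 / 2) * g z + 2 * h z) volume M0 0 :=
    (hDint.add (hgint.const_mul _)).add (hhint.const_mul _)
  have hmono : ∫ z in M0..0, g z ≤ ∫ z in M0..0, (D z + (1 / 2) * g z + 2 * h z) :=
    intervalIntegral.integral_mono_on hM0le hgint hRint hpt
  have hsplitInt : ∫ z in M0..0, (D z + (1 / 2) * g z + 2 * h z)
      = (∫ z in M0..0, D z) + (1 / 2) * (∫ z in M0..0, g z)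
        + 2 * (∫ z in M0..0, h z) := by
    rw [intervalIntegral.integral_add (hDint.add (hgint.const_mul _)) (hhint.const_mul _),
      intervalIntegral.integral_add hDint (hgint.const_mul _),
      intervalIntegral.integral_const_mul, intervalIntegral.integral_const_mul]
  have hJnonneg : 0 ≤ ∫ z in M0..0, h z :=
    intervalIntegral.integral_nonneg hM0le (fun x _ => sq_nonneg _)
  have hcore : ∫ z in M0..0, g z ≤ 2 * f 0 ^ 2 + 8 * ∫ z in M0..0, h z := by
    rw [hsplitInt, key] at hmono
    linarith
  -- relate set integrals over Iic 0 to interval integrals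
  have hsplit : Set.Iic (0 : ℝ) = Set.Iio M0 ∪ Set.Icc M0 0 := by
    ext x
    simp only [Set.mem_Iic, Set.mem_union, Set.mem_Iio, Set.mem_Icc]
    constructor
    · intro hx
      rcases lt_or_ge x M0 with h' | h'
      · exact Or.inl h'
      · exact Or.inr ⟨h', hx⟩
    · rintro (h' | ⟨_, h'⟩)
      · linarith
      · exact h'
  have hdisj : Disjoint (Set.Iio M0) (Set.Icc M0 (0 : ℝ)) := by
    rw [Set.disjoint_left]
    intro x hx1 hx2
    exact absurd hx2.1 (not_le.2 hx1)
  have hgIio : ∀ x ∈ Set.Iio M0, g x = 0 := by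
    intro x hx
    simp [hgdef, hM0 x (le_of_lt hx)]
  have hhIio : ∀ x ∈ Set.Iio M0, h x = 0 := by
    intro x hx
    simp [hhdef, hderiv0 x hx]
  have hgIioInt : IntegrableOn g (Set.Iio M0) := by
    rw [integrableOn_congr_fun hgIio measurableSet_Iio]
    exact integrableOn_zero
  have hhIioInt : IntegrableOn h (Set.Iio M0) := by
    rw [integrableOn_congr_fun hhIio measurableSet_Iio]
    exact integrableOn_zero
  have hgIccInt : IntegrableOn g (Set.Icc M0 0) :=
    (hgcont.mono hIccsub).integrableOn_Icc
  have hhIccInt : IntegrableOn h (Set.Icc M0 0) :=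
    (hf'c.pow 2).integrableOn_Icc
  have hgIic : ∫ z in Set.Iic (0 : ℝ), g z = ∫ z in M0..0, g z := by
    rw [hsplit, setIntegral_union hdisj measurableSet_Icc hgIioInt hgIccInt,
      setIntegral_congr_fun measurableSet_Iio hgIio,
      intervalIntegral.integral_of_le hM0le,
      ← MeasureTheory.integral_Icc_eq_integral_Ioc]
    simp
  have hhIic : ∫ z in Set.Iic (0 : ℝ), h z = ∫ z in M0..0, h z := by
    rw [hsplit, setIntegral_union hdisj measurableSet_Icc hhIioInt hhIccInt,
      setIntegral_congr_fun measurableSet_Iio hhIio,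
      intervalIntegral.integral_of_le hM0le,
      ← MeasureTheory.integral_Icc_eq_integral_Ioc]
    simp
  calc ∫ z in Set.Iic (0 : ℝ), f z ^ 2 / (1 - z) ^ 2 = ∫ z in M0..0, g z := hgIic
    _ ≤ 2 * f 0 ^ 2 + 8 * ∫ z in M0..0, h z := hcore
    _ = 2 * f 0 ^ 2 + 8 * ∫ z in Set.Iic (0 : ℝ), deriv f z ^ 2 := by rw [hhIic]
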